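/- arXiv:1212.3948 — 4 statements merged into one kernel-verified Lean document; each statement's English description precedes it below -/
import Mathlib

section
/- Let N be a P-regular distributive nearring. Then for every right ideal R and every left ideal L of N, (P + R) ∩ (P + L) = P + RL, where RL denotes the additive subgroup generated by products rl with r ∈ R, l ∈ L (or the set of sums of such products). -/
open Pointwise

/-- A (right) nearring: additive group, multiplicative semigroup, right distributivity. -/
class Nearring (N : Type*) extends AddGroup N, Semigroup N where
  right_distrib : ∀ a b c : N, (a + b) * c = a * c + b * c

variable {N : Type*}

/-- `S` is an additive subgroup of the nearring (as a set). -/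
def IsAddSub [Nearring N] (S : Set N) : Prop :=
  S.Nonempty ∧ (∀ a ∈ S, ∀ b ∈ S, a + b ∈ S) ∧ ∀ a ∈ S, -a ∈ S

/-- `S` is a normal additive subgroup. -/
def IsNormalAddSub [Nearring N] (S : Set N) : Prop :=
  IsAddSub S ∧ ∀ s ∈ S, ∀ n : N, n + s + -n ∈ S

/-- `P` is a (two-sided) ideal of the nearring `N`. -/
def IsIdeal [Nearring N] (P : Set N) : Prop :=
  IsNormalAddSub P ∧ (∀ p ∈ P, ∀ n : N, p * n ∈ P) ∧
    (∀ p ∈ P, ∀ n : N, n * p ∈ P) ∧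
    ∀ p ∈ P, ∀ n₁ n₂ : N, n₁ * (n₂ + p) - n₁ * n₂ ∈ P

/-- `N` is `P`-regular: `P` is an ideal and for each `x` there is `y` with `x*y*x - x ∈ P`. -/
def IsPRegular [Nearring N] (P : Set N) : Prop :=
  IsIdeal P ∧ ∀ x : N, ∃ y : N, x * y * x - x ∈ P

/-- `B` is a bi-ideal: additive subgroup with `BNB ⊆ B`. -/
def IsBiIdeal [Nearring N] (B : Set N) : Prop :=
  IsAddSub B ∧ ∀ b₁ ∈ B, ∀ n : N, ∀ b₂ ∈ B, b₁ * n * b₂ ∈ B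

/-- The nearring is distributive (also left distributive). -/
def IsDistrib (N : Type*) [Nearring N] : Prop :=
  ∀ a b c : N, a * (b + c) = a * b + a * c

/-- The set `A N C = {a n c : a ∈ A, n ∈ N, c ∈ C}`. -/
def prodSet [Nearring N] (A C : Set N) : Set N :=
  {z | ∃ a ∈ A, ∃ n : N, ∃ c ∈ C, z = a * n * c}

/-- `R` is a right ideal: normal additive subgroup with `RN ⊆ R`. -/
def IsRightIdeal {N : Type*} [Nearring N] (R : Set N) : Prop :=
  IsNormalAddSub R ∧ ∀ r ∈ R, ∀ n : N, r * n ∈ R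

/-- `L` is a left ideal. -/
def IsLeftIdeal {N : Type*} [Nearring N] (L : Set N) : Prop :=
  IsNormalAddSub L ∧ (∀ l ∈ L, ∀ n : N, n * l ∈ L) ∧
    ∀ l ∈ L, ∀ n₁ n₂ : N, n₁ * (n₂ + l) - n₁ * n₂ ∈ L

theorem stmt4 {N : Type*} [Nearring N] (hd : IsDistrib N) (P : Set N)
    (hP : IsPRegular P) (R L : Set N) (hR : IsRightIdeal R) (hL : IsLeftIdeal L) :
    (P + R) ∩ (P + L) =
      P + (AddSubgroup.closure {z : N | ∃ r ∈ R, ∃ l ∈ L, z = r * l} : Set N) := by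
  obtain ⟨⟨⟨⟨hPne, hPadd, hPneg⟩, _⟩, hPmulr, hPmull, _⟩, hreg⟩ := hP
  obtain ⟨⟨⟨hRne, hRadd, hRneg⟩, _⟩, hRmul⟩ := hR
  obtain ⟨⟨⟨hLne, hLadd, hLneg⟩, _⟩, hLmul, _⟩ := hL
  have hR0 : (0:N) ∈ R := by
    obtain ⟨a, ha⟩ := hRne
    simpa using hRadd a ha (-a) (hRneg a ha)
  have hL0 : (0:N) ∈ L := by
    obtain ⟨a, ha⟩ := hLne
    simpa using hLadd a ha (-a) (hLneg a ha)
  set S : Set N := {z : N | ∃ r ∈ R, ∃ l ∈ L, z = r * l} with hS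
  -- the closure of S lies in both R and L
  have hSR : ∀ c ∈ (AddSubgroup.closure S : Set N), c ∈ R ∧ c ∈ L := by
    intro c hc
    refine AddSubgroup.closure_induction (fun x hx => ?_) ?_ ?_ ?_ hc
    · obtain ⟨r, hr, l, hl, rfl⟩ := hx
      exact ⟨hRmul r hr l, hLmul l hl r⟩
    · exact ⟨hR0, hL0⟩
    · rintro x y _ _ ⟨hxR, hxL⟩ ⟨hyR, hyL⟩
      exact ⟨hRadd x hxR y hyR, hLadd x hxL y hyL⟩
    · rintro x _ ⟨hxR, hxL⟩
      exact ⟨hRneg x hxR, hLneg x hxL⟩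
  ext x
  constructor
  · rintro ⟨hx1, hx2⟩
    obtain ⟨p₁, hp₁, r, hr, rfl⟩ := Set.mem_add.mp hx1
    obtain ⟨p₂, hp₂, l, hl, hEq⟩ := Set.mem_add.mp hx2
    obtain ⟨y, hy⟩ := hreg (p₁ + r)
    have key : (p₁ + r) * y * (p₁ + r) =
        (p₁ * y + r * y) * p₂ + (p₁ * y * l + r * y * l) := by
      have h0 : (p₁ + r) * y * (p₁ + r) = (p₁ + r) * y * (p₂ + l) := by rw [hEq]
      rw [h0, hd, Nearring.right_distrib p₁ r y, Nearring.right_distrib (p₁ * y) (r * y) l]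
    have hq1 : (p₁ * y + r * y) * p₂ ∈ P := hPmull p₂ hp₂ _
    have hq2 : p₁ * y * l ∈ P := hPmulr _ (hPmulr p₁ hp₁ y) l
    have hz : r * y * l ∈ S := ⟨r * y, hRmul r hr y, l, hl, rfl⟩
    have hpm : (p₁ + r) - r * y * l ∈ P := by
      have heq2 : (p₁ + r) - r * y * l =
          -((p₁ + r) * y * (p₁ + r) - (p₁ + r)) +
            ((p₁ * y + r * y) * p₂ + p₁ * y * l) := by
        rw [key]
        simp [sub_eq_add_neg, neg_add_rev, add_assoc, neg_add_cancel_left]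
      rw [heq2]
      exact hPadd _ (hPneg _ hy) _ (hPadd _ hq1 _ hq2)
    refine Set.mem_add.mpr ⟨(p₁ + r) - r * y * l, hpm, r * y * l,
      AddSubgroup.subset_closure hz, sub_add_cancel _ _⟩
  · rintro hx
    obtain ⟨p, hp, c, hc, rfl⟩ := Set.mem_add.mp hx
    obtain ⟨hcR, hcL⟩ := hSR c hc
    exact ⟨Set.mem_add.mpr ⟨p, hp, c, hcR, rfl⟩, Set.mem_add.mpr ⟨p, hp, c, hcL, rfl⟩⟩
end

section
/- Let N be a P-regular nearring and B a bi-ideal of N. Then P + B = P + BNB (as sets, where X + Y = {x+y : x ∈ X, y ∈ Y} and BNB = {b₁nb₂ : b₁,b₂ ∈ B, n ∈ N}). -/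
open Pointwise

variable {N : Type*}

theorem stmt8 {N : Type*} [Nearring N] (P : Set N) (hP : IsPRegular P)
    (B : Set N) (hB : IsBiIdeal B) :
    P + B = P + prodSet B B := by
  ext x
  constructor
  · rintro ⟨p, hp, b, hb, rfl⟩
    obtain ⟨y, hy⟩ := hP.2 b
    have h1 : b - b * y * b ∈ P := by
      have := hP.1.1.1.2.2 _ hy
      rwa [neg_sub] at this
    refine ⟨p + (b - b * y * b), hP.1.1.1.2.1 _ hp _ h1, b * y * b,
      ⟨b, hb, y, b, hb, rfl⟩, ?_⟩
    show p + (b - b * y * b) + b * y * b = p + b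
    rw [add_assoc, sub_add_cancel]
  · rintro ⟨p, hp, z, ⟨b₁, hb₁, n, b₂, hb₂, rfl⟩, rfl⟩
    exact ⟨p, hp, _, hB.2 _ hb₁ n _ hb₂, rfl⟩
end

section
/- Let N be a P-regular nearring and B₁, B₂ bi-ideals of N. Then P + (B₁ ∩ B₂) ⊆ P + (B₁NB₂ ∩ B₂NB₁), where X + Y = {x+y : x ∈ X, y ∈ Y} and BᵢNBⱼ = {bnb' : b ∈ Bᵢ, n ∈ N, b' ∈ Bⱼ}. -/
open Pointwise

variable {N : Type*}

theorem stmt9 {N : Type*} [Nearring N] (P : Set N) (hP : IsPRegular P)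
    (B₁ B₂ : Set N) (h₁ : IsBiIdeal B₁) (h₂ : IsBiIdeal B₂) :
    P + (B₁ ∩ B₂) ⊆ P + (prodSet B₁ B₂ ∩ prodSet B₂ B₁) := by
  rintro z ⟨p, hp, x, ⟨hx1, hx2⟩, rfl⟩
  obtain ⟨y, hy⟩ := hP.2 x
  refine ⟨p + (x - x * y * x), ?_, x * y * x, ⟨⟨x, hx1, y, x, hx2, rfl⟩, ⟨x, hx2, y, x, hx1, rfl⟩⟩, ?_⟩
  · exact hP.1.1.1.2.1 p hp _ ((neg_sub (x * y * x) x) ▸ hP.1.1.1.2.2 _ hy)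
  · show p + (x - x * y * x) + x * y * x = p + x
    rw [add_assoc, sub_add_cancel]
end

section
/- Let N be a P-regular nearring and B₁,…,Bₙ bi-ideals of N (n ≥ 2). Then P + (B₁ ∩ … ∩ Bₙ) ⊆ P + (B₁NBₙ ∩ B₂NBₙ ∩ … ∩ B_{n-1}NBₙ ∩ BₙNB₁ ∩ BₙNB₂ ∩ … ∩ BₙNB_{n-1}). -/
open Pointwise

variable {N : Type*}

theorem stmt10 {N : Type*} [Nearring N] (P : Set N) (hP : IsPRegular P)
    (n : ℕ) (hn : 2 ≤ n) (B : Fin n → Set N) (hB : ∀ i, IsBiIdeal (B i)) :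
    P + (⋂ i, B i) ⊆
      P + ⋂ i ∈ {i : Fin n | i ≠ ⟨n - 1, by omega⟩},
        (prodSet (B i) (B ⟨n - 1, by omega⟩) ∩ prodSet (B ⟨n - 1, by omega⟩) (B i)) := by
  rintro x hx
  rw [Set.mem_add] at hx
  obtain ⟨p, hp, b, hb, rfl⟩ := hx
  rw [Set.mem_iInter] at hb
  obtain ⟨y, hy⟩ := hP.2 b
  set L : Fin n := ⟨n - 1, by omega⟩
  refine Set.mem_add.2 ⟨p + -(b * y * b - b), ?_, b * y * b, ?_, ?_⟩
  · exact hP.1.1.1.2.1 p hp _ (hP.1.1.1.2.2 _ hy)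
  · refine Set.mem_iInter₂.2 fun i _ => ⟨⟨b, hb i, y, b, hb L, rfl⟩, ⟨b, hb L, y, b, hb i, rfl⟩⟩
  · rw [sub_eq_add_neg, neg_add_rev, neg_neg, add_assoc, add_assoc, neg_add_cancel, add_zero]
end
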